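/- Let G be a finite simple connected graph, let v be a cut vertex of G (i.e., G − v is disconnected), let C₁ be a connected component of G − v, let G₁ be the subgraph of G induced on V(C₁) ∪ {v}, and let G₂ be the subgraph of G induced on V(G) \ V(C₁). Let k₁, k₂, ℓ₁, ℓ₂ be natural numbers. If G₁ is k₁-contractible to some graph T₁ ∈ T_{ℓ₁} and G₂ is k₂-contractible to some graph T₂ ∈ T_{ℓ₂}, then G is (k₁ + k₂)-contractible to some graph T ∈ T_{ℓ₁ + ℓ₂}. -/

import Mathlib

/-- `φ` is a `T`-witness structure of `G`: a surjective map such that every witness set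
`W(t) = φ⁻¹(t)` induces a connected subgraph of `G`, and distinct `t, t'` are adjacent in `T`
iff there is an edge of `G` between the corresponding witness sets. -/
def IsWitnessStructure {V W : Type} (G : SimpleGraph V) (T : SimpleGraph W) (φ : V → W) : Prop :=
  Function.Surjective φ ∧
  (∀ t : W, (G.induce {v | φ v = t}).Connected) ∧
  (∀ t t' : W, t ≠ t' → (T.Adj t t' ↔ ∃ u u' : V, φ u = t ∧ φ u' = t' ∧ G.Adj u u'))

/-- `G` is `k`-contractible to some graph `T ∈ 𝕋_ℓ`, i.e. to some connected graph `T`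
with `|E(T)| ≤ |V(T)| - 1 + ℓ`, via a witness structure of total cost
`Σ_t (|W(t)| - 1) ≤ k`. -/
def IsKContractibleToTl {V : Type} (G : SimpleGraph V) (k ℓ : ℕ) : Prop :=
  ∃ (n : ℕ) (T : SimpleGraph (Fin n)) (φ : V → Fin n),
    IsWitnessStructure G T φ ∧
    (∑ t : Fin n, ({v : V | φ v = t}.ncard - 1)) ≤ k ∧
    T.Connected ∧ T.edgeSet.ncard ≤ n - 1 + ℓ

lemma induce_induce_connected {V : Type} (G : SimpleGraph V) (S : Set V) (A : Set S)
    (h : ((G.induce S).induce A).Connected) :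
    (G.induce (Subtype.val '' A)).Connected := by
  have e : ((G.induce S).induce A) ≃g (G.induce (Subtype.val '' A)) := by
    refine ⟨Equiv.Set.image Subtype.val A Subtype.val_injective, ?_⟩
    rintro ⟨⟨a, ha⟩, haA⟩ ⟨⟨b, hb⟩, hbA⟩
    simp [Equiv.Set.image, Equiv.Set.imageOfInjOn]
  exact e.connected_iff.mp h

lemma induce_union_connected {V : Type} (G : SimpleGraph V) {A B : Set V}
    (hA : (G.induce A).Connected) (hB : (G.induce B).Connected)
    {v : V} (hvA : v ∈ A) (hvB : v ∈ B) :
    (G.induce (A ∪ B)).Connected := by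
  have key : ∀ x : ↥(A ∪ B), (G.induce (A ∪ B)).Reachable x ⟨v, Or.inl hvA⟩ := by
    rintro ⟨x, hx | hx⟩
    · have h1 := hA.preconnected ⟨x, hx⟩ ⟨v, hvA⟩
      have h2 := h1.map (G.induceHomOfLE (s' := A ∪ B) Set.subset_union_left).toHom
      exact h2
    · have h1 := hB.preconnected ⟨x, hx⟩ ⟨v, hvB⟩
      have h2 := h1.map (G.induceHomOfLE (s' := A ∪ B) Set.subset_union_right).toHom
      exact h2
  haveI : Nonempty ↥(A ∪ B) := ⟨⟨v, Or.inl hvA⟩⟩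
  exact ⟨fun x y => (key x).trans (key y).symm⟩

lemma toFin {V W : Type} [Fintype W] (G : SimpleGraph V) (T : SimpleGraph W) (φ : V → W)
    {k ℓ : ℕ}
    (hw : IsWitnessStructure G T φ)
    (hk : (∑ t : W, ({v : V | φ v = t}.ncard - 1)) ≤ k)
    (hT : T.Connected) (he : T.edgeSet.ncard ≤ Fintype.card W - 1 + ℓ) :
    IsKContractibleToTl G k ℓ := by
  classical
  obtain ⟨hsurj, hconn, hadj⟩ := hw
  set n := Fintype.card W
  let e : W ≃ Fin n := Fintype.equivFin W
  have iso : T ≃g T.comap ⇑e.symm := by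
    refine ⟨e, ?_⟩
    intro a b
    simp [SimpleGraph.comap]
  refine ⟨n, T.comap ⇑e.symm, e ∘ φ, ⟨e.surjective.comp hsurj, ?_, ?_⟩, ?_, ?_, ?_⟩
  · intro t
    have : {v : V | (e ∘ φ) v = t} = {v : V | φ v = e.symm t} := by
      ext u; simp [Equiv.eq_symm_apply]
    rw [this]; exact hconn _
  · intro t t' hne
    have hne' : e.symm t ≠ e.symm t' := fun h => hne (e.symm.injective h)
    rw [SimpleGraph.comap_adj]
    rw [hadj _ _ hne']
    constructor
    · rintro ⟨u, u', h1, h2, h3⟩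
      exact ⟨u, u', by simp [h1, Function.comp], by simp [h2, Function.comp], h3⟩
    · rintro ⟨u, u', h1, h2, h3⟩
      refine ⟨u, u', ?_, ?_, h3⟩
      · rw [Equiv.eq_symm_apply]; exact h1
      · rw [Equiv.eq_symm_apply]; exact h2
  · refine le_trans (le_of_eq ?_) hk
    refine Fintype.sum_equiv e.symm _ _ ?_
    intro t
    congr 2
    ext u
    simp [Equiv.eq_symm_apply, eq_comm, Function.comp]
  · exact iso.connected_iff.mp hT
  · have : (T.comap ⇑e.symm).edgeSet.ncard = T.edgeSet.ncard := by
      rw [← Nat.card_coe_set_eq, ← Nat.card_coe_set_eq]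
      exact (Nat.card_congr iso.mapEdgeSet.symm)
    rw [this]; exact he


/-- Let `v` be a cut vertex of a connected graph `G`, let `C` be a connected component of
`G - v`, let `G₁` be induced on `V(C) ∪ {v}` and `G₂` induced on `V(G) \ V(C)`.  If `G₁` is
`k₁`-contractible to a graph in `𝕋_{ℓ₁}` and `G₂` is `k₂`-contractible to a graph in
`𝕋_{ℓ₂}`, then `G` is `(k₁ + k₂)`-contractible to a graph in `𝕋_{ℓ₁ + ℓ₂}`. -/
theorem contractible_glue_at_cut_vertex {V : Type} [Fintype V] (G : SimpleGraph V)
    (hconn : G.Connected) (v : V)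
    (hcut : ¬ (G.induce {u | u ≠ v}).Connected)
    (C : (G.induce {u | u ≠ v}).ConnectedComponent)
    (k₁ k₂ ℓ₁ ℓ₂ : ℕ)
    (h₁ : IsKContractibleToTl (G.induce (Subtype.val '' C.supp ∪ {v})) k₁ ℓ₁)
    (h₂ : IsKContractibleToTl (G.induce (Subtype.val '' C.supp)ᶜ) k₂ ℓ₂) :
    IsKContractibleToTl G (k₁ + k₂) (ℓ₁ + ℓ₂) := by
  classical
  set Cs : Set V := Subtype.val '' C.supp with hCsdef
  set S₁ : Set V := Cs ∪ {v} with hS₁def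
  set S₂ : Set V := Csᶜ with hS₂def
  obtain ⟨n₁, T₁, φ₁, ⟨hs₁, hc₁, ha₁⟩, hk₁, hT₁conn, hT₁e⟩ := h₁
  obtain ⟨n₂, T₂, φ₂, ⟨hs₂, hc₂, ha₂⟩, hk₂, hT₂conn, hT₂e⟩ := h₂
  have hvC : v ∉ Cs := by
    rintro ⟨y, -, hy⟩
    exact y.2 hy
  have hv₁ : v ∈ S₁ := Or.inr rfl
  have hv₂ : v ∈ S₂ := hvC
  have no_cross : ∀ u w : V, u ∈ Cs → w ∉ S₁ → ¬ G.Adj u w := by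
    rintro u w ⟨y, hy, rfl⟩ hw hadj
    have hwv : w ≠ v := fun h => hw (h ▸ Or.inr rfl)
    have hadj' : (G.induce {u | u ≠ v}).Adj y ⟨w, hwv⟩ := hadj
    have hyC := (SimpleGraph.ConnectedComponent.mem_supp_iff C y).mp hy
    have hwC : (⟨w, hwv⟩ : {u | u ≠ v}) ∈ C.supp :=
      (SimpleGraph.ConnectedComponent.mem_supp_iff C _).mpr
        ((SimpleGraph.ConnectedComponent.sound hadj'.symm.reachable).trans hyC)
    exact hw (Or.inl ⟨⟨w, hwv⟩, hwC, rfl⟩)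
  -- the special blocks
  set t₁ : Fin n₁ := φ₁ ⟨v, hv₁⟩ with ht₁def
  set t₂ : Fin n₂ := φ₂ ⟨v, hv₂⟩ with ht₂def
  -- the glued vertex type
  let r : Fin n₂ → (Fin n₁ ⊕ {t : Fin n₂ // t ≠ t₂}) :=
    fun t => if h : t = t₂ then Sum.inl t₁ else Sum.inr ⟨t, h⟩
  let φ : V → (Fin n₁ ⊕ {t : Fin n₂ // t ≠ t₂}) :=
    fun x => if hx : x ∈ Cs then Sum.inl (φ₁ ⟨x, Or.inl hx⟩) else r (φ₂ ⟨x, hx⟩)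
  have hr₂ : ∀ t : Fin n₂, ∀ h : t ≠ t₂, r t = Sum.inr ⟨t, h⟩ := fun t h => dif_neg h
  have hrt₂ : r t₂ = Sum.inl t₁ := dif_pos rfl
  have hφ₁ : ∀ y : ↥S₁, φ y.val = Sum.inl (φ₁ y) := by
    rintro ⟨x, hx | hx⟩
    · simp only [φ, dif_pos hx]
    · have hxv : x = v := hx
      subst hxv
      simp only [φ, dif_neg hvC]
      show r (φ₂ ⟨x, hv₂⟩) = _
      rw [show φ₂ ⟨x, hv₂⟩ = t₂ from rfl, hrt₂]
  have hφ₂ : ∀ y : ↥S₂, φ y.val = r (φ₂ y) := by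
    rintro ⟨x, hx⟩
    simp only [φ, dif_neg hx]
  -- classification of φ values
  have hinl_out : ∀ (x : V) (s : Fin n₁), x ∉ S₁ → φ x = Sum.inl s → s = t₁ := by
    intro x s hx hφx
    have hxC : x ∉ Cs := fun h => hx (Or.inl h)
    rw [hφ₂ ⟨x, hxC⟩] at hφx
    by_cases h : φ₂ ⟨x, hxC⟩ = t₂
    · rw [h, hrt₂] at hφx; exact (Sum.inl.inj hφx).symm
    · rw [hr₂ _ h] at hφx; exact absurd hφx (by simp)
  have hinl_in : ∀ (x : V) (hx : x ∈ S₁) (s : Fin n₁), φ x = Sum.inl s → φ₁ ⟨x, hx⟩ = s := by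
    intro x hx s hφx
    have := hφ₁ ⟨x, hx⟩
    rw [hφx] at this
    exact (Sum.inl.inj this).symm
  have hinr_mem : ∀ (x : V) (t : {t : Fin n₂ // t ≠ t₂}), φ x = Sum.inr t →
      ∃ hx : x ∈ S₂, φ₂ ⟨x, hx⟩ = t.val ∧ x ∉ S₁ := by
    intro x t hφx
    by_cases hxC : x ∈ Cs
    · rw [show φ x = Sum.inl (φ₁ ⟨x, Or.inl hxC⟩) from hφ₁ ⟨x, Or.inl hxC⟩] at hφx
      exact absurd hφx (by simp)
    · have hx2 : x ∈ S₂ := hxC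
      rw [hφ₂ ⟨x, hx2⟩] at hφx
      by_cases h : φ₂ ⟨x, hx2⟩ = t₂
      · rw [h, hrt₂] at hφx; exact absurd hφx (by simp)
      · rw [hr₂ _ h] at hφx
        have hval : φ₂ ⟨x, hx2⟩ = t.val := congrArg Subtype.val (Sum.inr.inj hφx)
        refine ⟨hx2, hval, ?_⟩
        rintro (hC | hv)
        · exact hxC hC
        · have hxv : x = v := hv
          subst hxv
          exact h rfl
  -- witness sets of the glued map
  have hWinl : ∀ s : Fin n₁, s ≠ t₁ →
      {x : V | φ x = Sum.inl s} = Subtype.val '' {y : ↥S₁ | φ₁ y = s} := by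
    intro s hs
    ext x
    constructor
    · intro hx
      by_cases hmem : x ∈ S₁
      · exact ⟨⟨x, hmem⟩, hinl_in x hmem s hx, rfl⟩
      · exact absurd (hinl_out x s hmem hx) hs
    · rintro ⟨y, hy, rfl⟩
      show φ y.val = _
      rw [hφ₁ y, hy]
  have hWstar : {x : V | φ x = Sum.inl t₁} =
      Subtype.val '' {y : ↥S₁ | φ₁ y = t₁} ∪ Subtype.val '' {y : ↥S₂ | φ₂ y = t₂} := by
    ext x
    constructor
    · intro hx
      by_cases hmem : x ∈ Cs
      · exact Or.inl ⟨⟨x, Or.inl hmem⟩, hinl_in x (Or.inl hmem) t₁ hx, rfl⟩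
      · have hx2 : x ∈ S₂ := hmem
        have hφx : r (φ₂ ⟨x, hx2⟩) = Sum.inl t₁ := by rw [← hφ₂ ⟨x, hx2⟩]; exact hx
        by_cases h : φ₂ ⟨x, hx2⟩ = t₂
        · exact Or.inr ⟨⟨x, hx2⟩, h, rfl⟩
        · rw [hr₂ _ h] at hφx; exact absurd hφx (by simp)
    · rintro (⟨y, hy, rfl⟩ | ⟨y, hy, rfl⟩)
      · show φ y.val = _
        rw [hφ₁ y, hy]
      · show φ y.val = _
        rw [hφ₂ y, hy, hrt₂]
  have hWinr : ∀ t : {t : Fin n₂ // t ≠ t₂},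
      {x : V | φ x = Sum.inr t} = Subtype.val '' {y : ↥S₂ | φ₂ y = t.val} := by
    intro t
    ext x
    constructor
    · intro hx
      obtain ⟨hx2, heq, -⟩ := hinr_mem x t hx
      exact ⟨⟨x, hx2⟩, heq, rfl⟩
    · rintro ⟨y, hy, rfl⟩
      show φ y.val = _
      rw [hφ₂ y, hy, hr₂ _ t.2]
  -- the glued target graph
  let T : SimpleGraph (Fin n₁ ⊕ {t : Fin n₂ // t ≠ t₂}) :=
    { Adj := fun a b => a ≠ b ∧ ∃ u u' : V, φ u = a ∧ φ u' = b ∧ G.Adj u u'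
      symm := ⟨by rintro a b ⟨hne, u, u', hu1, hu2, hu3⟩; exact ⟨hne.symm, u', u, hu2, hu1, hu3.symm⟩⟩
      loopless := ⟨fun a h => h.1 rfl⟩ }
  have key : ∀ (s t : Fin n₁), s ≠ t → ∀ (x x' : V), φ x = Sum.inl s → φ x' = Sum.inl t →
      G.Adj x x' → x ∈ S₁ := by
    intro s t hst x x' hx hx' hG
    by_contra hxS
    have hs : s = t₁ := hinl_out x s hxS hx
    by_cases hx'S : x' ∈ S₁
    · rcases hx'S with hC | hvv
      · exact no_cross x' x hC hxS hG.symm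
      · have hx'v : x' = v := hvv
        subst hx'v
        have ht : φ₁ ⟨x', hv₁⟩ = t := hinl_in x' hv₁ t hx'
        exact hst (hs.trans ht)
    · have ht' : t = t₁ := hinl_out x' t hx'S hx'
      exact hst (hs.trans ht'.symm)
  have hAdjInl : ∀ s t : Fin n₁, T.Adj (Sum.inl s) (Sum.inl t) ↔ T₁.Adj s t := by
    intro s t
    constructor
    · rintro ⟨hne, u, u', hu, hu', hG⟩
      have hst : s ≠ t := fun h => hne (by rw [h])
      have hu₁ : u ∈ S₁ := key s t hst u u' hu hu' hG
      have hu'₁ : u' ∈ S₁ := key t s hst.symm u' u hu' hu hG.symm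
      exact (ha₁ s t hst).mpr
        ⟨⟨u, hu₁⟩, ⟨u', hu'₁⟩, hinl_in u hu₁ s hu, hinl_in u' hu'₁ t hu', hG⟩
    · intro h
      have hst : s ≠ t := h.ne
      obtain ⟨y, y', hy, hy', hGyy⟩ := (ha₁ s t hst).mp h
      refine ⟨by simpa using hst, y.val, y'.val, ?_, ?_, hGyy⟩
      · rw [hφ₁ y, hy]
      · rw [hφ₁ y', hy']
  have hAdjInr : ∀ s t : {t : Fin n₂ // t ≠ t₂},
      T.Adj (Sum.inr s) (Sum.inr t) ↔ T₂.Adj s.val t.val := by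
    intro s t
    constructor
    · rintro ⟨hne, u, u', hu, hu', hG⟩
      obtain ⟨hu2, huv, -⟩ := hinr_mem u s hu
      obtain ⟨hu'2, hu'v, -⟩ := hinr_mem u' t hu'
      have hst : s.val ≠ t.val := fun h => hne (by rw [Subtype.ext h])
      exact (ha₂ s.val t.val hst).mpr ⟨⟨u, hu2⟩, ⟨u', hu'2⟩, huv, hu'v, hG⟩
    · intro h
      obtain ⟨y, y', hy, hy', hGyy⟩ := (ha₂ _ _ h.ne).mp h
      refine ⟨?_, y.val, y'.val, ?_, ?_, hGyy⟩
      · intro hh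
        exact h.ne (congrArg Subtype.val (Sum.inr.inj hh))
      · rw [hφ₂ y, hy, hr₂ _ s.2]
      · rw [hφ₂ y', hy', hr₂ _ t.2]
  have hAdjMix : ∀ (s : Fin n₁) (t : {t : Fin n₂ // t ≠ t₂}),
      T.Adj (Sum.inl s) (Sum.inr t) ↔ s = t₁ ∧ T₂.Adj t₂ t.val := by
    intro s t
    constructor
    · rintro ⟨hne, u, u', hu, hu', hG⟩
      obtain ⟨hu'2, hu'v, hu'nS₁⟩ := hinr_mem u' t hu'
      have huC : u ∉ Cs := fun h => no_cross u u' h hu'nS₁ hG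
      have hu2 : u ∈ S₂ := huC
      have hφu : r (φ₂ ⟨u, hu2⟩) = Sum.inl s := by rw [← hφ₂ ⟨u, hu2⟩]; exact hu
      by_cases hq : φ₂ ⟨u, hu2⟩ = t₂
      · rw [hq, hrt₂] at hφu
        exact ⟨(Sum.inl.inj hφu).symm,
          (ha₂ t₂ t.val (Ne.symm t.2)).mpr ⟨⟨u, hu2⟩, ⟨u', hu'2⟩, hq, hu'v, hG⟩⟩
      · rw [hr₂ _ hq] at hφu; exact absurd hφu (by simp)
    · rintro ⟨hs, h⟩
      obtain ⟨y, y', hy, hy', hGyy⟩ := (ha₂ t₂ t.val (Ne.symm t.2)).mp h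
      subst hs
      refine ⟨by simp, y.val, y'.val, ?_, ?_, hGyy⟩
      · rw [hφ₂ y, hy, hrt₂]
      · rw [hφ₂ y', hy', hr₂ _ t.2]
  -- surjectivity
  have hsurj : Function.Surjective φ := by
    rintro (t | t)
    · obtain ⟨y, rfl⟩ := hs₁ t
      exact ⟨y.val, hφ₁ y⟩
    · obtain ⟨y, hy⟩ := hs₂ t.val
      refine ⟨y.val, ?_⟩
      rw [hφ₂ y, hy, hr₂ _ t.2]
  -- witness set connectivity
  have hwconn : ∀ w : Fin n₁ ⊕ {t : Fin n₂ // t ≠ t₂}, (G.induce {x | φ x = w}).Connected := by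
    rintro (s | t)
    · by_cases hs : s = t₁
      · subst hs
        rw [hWstar]
        exact induce_union_connected G
          (induce_induce_connected G S₁ _ (hc₁ t₁))
          (induce_induce_connected G S₂ _ (hc₂ t₂))
          ⟨⟨v, hv₁⟩, rfl, rfl⟩ ⟨⟨v, hv₂⟩, rfl, rfl⟩
      · rw [hWinl s hs]
        exact induce_induce_connected G S₁ _ (hc₁ s)
    · rw [hWinr t]
      exact induce_induce_connected G S₂ _ (hc₂ t.val)
  -- witness adjacency condition (trivial by definition of T)
  have hadj : ∀ a b : Fin n₁ ⊕ {t : Fin n₂ // t ≠ t₂}, a ≠ b →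
      (T.Adj a b ↔ ∃ u u' : V, φ u = a ∧ φ u' = b ∧ G.Adj u u') :=
    fun a b hne => ⟨fun h => h.2, fun h => ⟨hne, h⟩⟩
  -- T is connected
  have hmap₁ : ∀ {a b : Fin n₁}, T₁.Adj a b → T.Adj (Sum.inl a) (Sum.inl b) :=
    fun {a b} h => (hAdjInl a b).mpr h
  have hmap₂ : ∀ {a b : Fin n₂}, T₂.Adj a b → T.Adj (r a) (r b) := by
    intro a b h
    by_cases hb : b = t₂
    · subst hb
      have ha' : a ≠ t₂ := h.ne
      rw [hrt₂, hr₂ _ ha']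
      exact ((hAdjMix t₁ ⟨a, ha'⟩).mpr ⟨rfl, h.symm⟩).symm
    · by_cases ha : a = t₂
      · subst ha
        rw [hrt₂, hr₂ _ hb]
        exact (hAdjMix t₁ ⟨b, hb⟩).mpr ⟨rfl, h⟩
      · rw [hr₂ _ ha, hr₂ _ hb]
        exact (hAdjInr ⟨a, ha⟩ ⟨b, hb⟩).mpr h
  have hTconn : T.Connected := by
    have hreach : ∀ w, T.Reachable (Sum.inl t₁) w := by
      rintro (s | t)
      · have h0 := (hT₁conn.preconnected t₁ s).map (⟨Sum.inl, hmap₁⟩ : T₁ →g T)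
        exact h0
      · have h0 := (hT₂conn.preconnected t₂ t.val).map (⟨r, hmap₂⟩ : T₂ →g T)
        change T.Reachable (r t₂) (r t.val) at h0
        rw [hrt₂, hr₂ _ t.2] at h0
        exact h0
    haveI : Nonempty (Fin n₁ ⊕ {t : Fin n₂ // t ≠ t₂}) := ⟨Sum.inl t₁⟩
    exact ⟨fun a b => (hreach a).symm.trans (hreach b)⟩
  -- cost bound
  have hncard_im₁ : ∀ A : Set ↥S₁, (Subtype.val '' A).ncard = A.ncard := fun A =>
    Set.ncard_image_of_injective A Subtype.val_injective
  have hncard_im₂ : ∀ A : Set ↥S₂, (Subtype.val '' A).ncard = A.ncard := fun A =>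
    Set.ncard_image_of_injective A Subtype.val_injective
  have hsum : (∑ w : Fin n₁ ⊕ {t : Fin n₂ // t ≠ t₂}, ({x : V | φ x = w}.ncard - 1)) ≤ k₁ + k₂ := by
    rw [Fintype.sum_sum_type]
    have estar : {x : V | φ x = Sum.inl t₁}.ncard - 1 ≤
        ({y : ↥S₁ | φ₁ y = t₁}.ncard - 1) + ({y : ↥S₂ | φ₂ y = t₂}.ncard - 1) := by
      rw [hWstar, ← hncard_im₁ {y : ↥S₁ | φ₁ y = t₁}, ← hncard_im₂ {y : ↥S₂ | φ₂ y = t₂}]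
      have h1 := Set.ncard_union_add_ncard_inter (Subtype.val '' {y : ↥S₁ | φ₁ y = t₁})
        (Subtype.val '' {y : ↥S₂ | φ₂ y = t₂}) (Set.toFinite _) (Set.toFinite _)
      have h2 : 0 < ((Subtype.val '' {y : ↥S₁ | φ₁ y = t₁}) ∩
          (Subtype.val '' {y : ↥S₂ | φ₂ y = t₂})).ncard := by
        rw [Set.ncard_pos (Set.toFinite _)]
        exact ⟨v, ⟨⟨v, hv₁⟩, rfl, rfl⟩, ⟨⟨v, hv₂⟩, rfl, rfl⟩⟩
      omega
    have hsum₁ : (∑ s : Fin n₁, ({x : V | φ x = Sum.inl s}.ncard - 1)) ≤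
        (∑ s : Fin n₁, ({y : ↥S₁ | φ₁ y = s}.ncard - 1)) + ({y : ↥S₂ | φ₂ y = t₂}.ncard - 1) := by
      rw [← Finset.add_sum_erase _ (fun s => ({x : V | φ x = Sum.inl s}.ncard - 1))
            (Finset.mem_univ t₁),
          ← Finset.add_sum_erase _ (fun s => ({y : ↥S₁ | φ₁ y = s}.ncard - 1))
            (Finset.mem_univ t₁)]
      have heq : ∑ s ∈ Finset.univ.erase t₁, ({x : V | φ x = Sum.inl s}.ncard - 1)
          = ∑ s ∈ Finset.univ.erase t₁, ({y : ↥S₁ | φ₁ y = s}.ncard - 1) :=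
        Finset.sum_congr rfl (fun s hs => by
          rw [hWinl s (Finset.ne_of_mem_erase hs), hncard_im₁])
      rw [heq]
      omega
    have hsum₂ : (∑ t : {t : Fin n₂ // t ≠ t₂}, ({x : V | φ x = Sum.inr t}.ncard - 1))
        = ∑ s ∈ Finset.univ.erase t₂, ({y : ↥S₂ | φ₂ y = s}.ncard - 1) := by
      rw [Finset.sum_subtype (Finset.univ.erase t₂)
        (p := fun t : Fin n₂ => t ≠ t₂) (fun x => by simp)
        (fun s => ({y : ↥S₂ | φ₂ y = s}.ncard - 1))]
      exact Finset.sum_congr rfl (fun t _ => by rw [hWinr t, hncard_im₂])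
    have htot : (∑ s : Fin n₂, ({y : ↥S₂ | φ₂ y = s}.ncard - 1))
        = ({y : ↥S₂ | φ₂ y = t₂}.ncard - 1)
          + ∑ s ∈ Finset.univ.erase t₂, ({y : ↥S₂ | φ₂ y = s}.ncard - 1) :=
      (Finset.add_sum_erase _ _ (Finset.mem_univ t₂)).symm
    have hk₁' : (∑ s : Fin n₁, ({y : ↥S₁ | φ₁ y = s}.ncard - 1)) ≤ k₁ := hk₁
    have hk₂' : (∑ s : Fin n₂, ({y : ↥S₂ | φ₂ y = s}.ncard - 1)) ≤ k₂ := hk₂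
    omega
  -- edge count
  have hcover : T.edgeSet ⊆ (Sym2.map Sum.inl '' T₁.edgeSet) ∪ (Sym2.map r '' T₂.edgeSet) := by
    intro e he
    induction e using Sym2.ind with
    | _ a b =>
      rw [SimpleGraph.mem_edgeSet] at he
      rcases a with s | s <;> rcases b with t | t
      · exact Or.inl ⟨s(s, t), (hAdjInl s t).mp he, Sym2.map_pair_eq _ _ _⟩
      · obtain ⟨hs, hadj⟩ := (hAdjMix s t).mp he
        exact Or.inr ⟨s(t₂, t.val), hadj, by
          rw [Sym2.map_pair_eq, hrt₂, hr₂ _ t.2, ← hs]⟩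
      · obtain ⟨ht, hadj⟩ := (hAdjMix t s).mp he.symm
        exact Or.inr ⟨s(t₂, s.val), hadj, by
          rw [Sym2.map_pair_eq, hrt₂, hr₂ _ s.2, ← ht, Sym2.eq_swap]⟩
      · exact Or.inr ⟨s(s.val, t.val), (hAdjInr s t).mp he, by
          rw [Sym2.map_pair_eq, hr₂ _ s.2, hr₂ _ t.2]⟩
  have hedgecount : T.edgeSet.ncard ≤ T₁.edgeSet.ncard + T₂.edgeSet.ncard := by
    calc T.edgeSet.ncard
        ≤ ((Sym2.map Sum.inl '' T₁.edgeSet) ∪ (Sym2.map r '' T₂.edgeSet)).ncard :=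
          Set.ncard_le_ncard hcover (Set.toFinite _)
      _ ≤ (Sym2.map Sum.inl '' T₁.edgeSet).ncard + (Sym2.map r '' T₂.edgeSet).ncard :=
          Set.ncard_union_le _ _
      _ ≤ T₁.edgeSet.ncard + T₂.edgeSet.ncard :=
          Nat.add_le_add (Set.ncard_image_le (Set.toFinite _))
            (Set.ncard_image_le (Set.toFinite _))
  have hcard : Fintype.card (Fin n₁ ⊕ {t : Fin n₂ // t ≠ t₂}) = n₁ + (n₂ - 1) := by
    have h2 : Fintype.card {t : Fin n₂ // t ≠ t₂} = n₂ - 1 := by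
      have hc := Fintype.card_subtype_compl (fun t : Fin n₂ => t = t₂)
      simpa [Fintype.card_subtype_eq] using hc
    rw [Fintype.card_sum, Fintype.card_fin, h2]
  refine toFin G T φ ⟨hsurj, hwconn, hadj⟩ hsum hTconn ?_
  rw [hcard]
  have hn₁ : 0 < n₁ := Fin.pos t₁
  have hn₂ : 0 < n₂ := Fin.pos t₂
  omega
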